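/- arXiv:2107.02951 — 2 statements merged into one kernel-verified Lean document; each statement's English description precedes it below -/
import Mathlib

section
/- Let 0 < γ < 2 and let A be the 2×2 real matrix [[0, 1], [−1, −γ]]. Then for all t ≥ 0, the spectral norm of the matrix exponential satisfies ‖exp(At)‖₂ ≤ √((2+γ)/(2−γ)) · e^{−γt/2}. -/
noncomputable section

open NormedSpace Matrix

set_option maxHeartbeats 1000000

lemma matKey (γ t : ℝ) (h0 : 0 < γ) (h2 : γ < 2) :
    (NormedSpace.exp (t • !![0, 1; -1, -γ]))ᵀ * !![(1:ℝ), γ/2; γ/2, 1] *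
        NormedSpace.exp (t • !![0, 1; -1, -γ])
      = Real.exp (-(γ * t)) • !![(1:ℝ), γ/2; γ/2, 1] := by
  set A : Matrix (Fin 2) (Fin 2) ℝ := !![0, 1; -1, -γ] with hA
  set P : Matrix (Fin 2) (Fin 2) ℝ := !![(1:ℝ), γ/2; γ/2, 1] with hP
  have hdet : IsUnit P.det := by
    have : P.det = 1 - (γ/2)^2 := by simp [hP, Matrix.det_fin_two_of]; ring
    rw [this]; exact isUnit_iff_ne_zero.mpr (by nlinarith)
  have hPunit : IsUnit P := (Matrix.isUnit_iff_isUnit_det P).mpr hdet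
  -- conjugation identity
  have hconj : (t • A)ᵀ = P * ((-(γ * t)) • (1 : Matrix (Fin 2) (Fin 2) ℝ) + (-t) • A) * P⁻¹ := by
    haveI := P.invertibleOfIsUnitDet hdet
    have hAT : Aᵀ = !![0, -1; 1, -γ] := by
      ext i j; fin_cases i <;> fin_cases j <;> simp [hA] <;> tauto
    rw [eq_comm, Matrix.mul_inv_eq_iff_eq_mul_of_invertible, Matrix.transpose_smul, hAT]
    ext i j
    fin_cases i <;> fin_cases j <;>
      simp [hA, hP, Matrix.mul_apply, Fin.sum_univ_two, Matrix.one_apply] <;> (first | ring1 | exact Or.inr (by ring))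
  have hcomm : Commute ((-(γ * t)) • (1 : Matrix (Fin 2) (Fin 2) ℝ)) ((-t) • A) :=
    ((Commute.one_left A).smul_left _).smul_right _
  have hsc : NormedSpace.exp ((-(γ * t)) • (1 : Matrix (Fin 2) (Fin 2) ℝ))
      = Real.exp (-(γ * t)) • (1 : Matrix (Fin 2) (Fin 2) ℝ) := by
    letI : SeminormedRing (Matrix (Fin 2) (Fin 2) ℝ) := Matrix.linftyOpSemiNormedRing
    letI : NormedRing (Matrix (Fin 2) (Fin 2) ℝ) := Matrix.linftyOpNormedRing
    letI : NormedAlgebra ℝ (Matrix (Fin 2) (Fin 2) ℝ) := Matrix.linftyOpNormedAlgebra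
    have h1 : ((-(γ * t)) • (1 : Matrix (Fin 2) (Fin 2) ℝ))
        = algebraMap ℝ (Matrix (Fin 2) (Fin 2) ℝ) (-(γ * t)) := by
      rw [Algebra.algebraMap_eq_smul_one]
    rw [h1]; erw [← NormedSpace.algebraMap_exp_comm]; rw [Algebra.algebraMap_eq_smul_one,
      Real.exp_eq_exp_ℝ]
  have hinv : NormedSpace.exp ((-t) • A) * NormedSpace.exp (t • A) = 1 := by
    rw [← Matrix.exp_add_of_commute _ _ (by rw [neg_smul]; exact (Commute.refl _).neg_left)]
    rw [neg_smul, neg_add_cancel]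
    exact NormedSpace.exp_zero
  calc (NormedSpace.exp (t • A))ᵀ * P * NormedSpace.exp (t • A)
      = NormedSpace.exp ((t • A)ᵀ) * P * NormedSpace.exp (t • A) := by
        rw [Matrix.exp_transpose]
    _ = (P * NormedSpace.exp ((-(γ * t)) • 1 + (-t) • A) * P⁻¹) * P
          * NormedSpace.exp (t • A) := by
        rw [hconj, Matrix.exp_conj P _ hPunit]
    _ = P * (NormedSpace.exp ((-(γ * t)) • 1) * NormedSpace.exp ((-t) • A))
          * NormedSpace.exp (t • A) := by
        rw [Matrix.exp_add_of_commute _ _ hcomm, Matrix.mul_assoc _ P⁻¹ P,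
          Matrix.nonsing_inv_mul P hdet, Matrix.mul_one]
    _ = Real.exp (-(γ * t)) • (P * (NormedSpace.exp ((-t) • A) * NormedSpace.exp (t • A))) := by
        rw [hsc]; noncomm_ring
    _ = Real.exp (-(γ * t)) • P := by rw [hinv, Matrix.mul_one]


/-- For `0 < γ < 2` and `A = [[0, 1], [−1, −γ]]`, the spectral norm of the matrix
exponential satisfies `‖exp(At)‖₂ ≤ √((2+γ)/(2−γ)) · e^{−γt/2}` for all `t ≥ 0`.
The spectral norm is realized as the operator norm of the associated continuous linear map
on the Euclidean space `ℝ²`. -/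
theorem stmt4 (γ : ℝ) (h0 : 0 < γ) (h2 : γ < 2) (t : ℝ) (ht : 0 ≤ t) :
    ‖NormedSpace.exp (t • (Matrix.toEuclideanCLM (𝕜 := ℝ) (n := Fin 2) !![0, 1; -1, -γ]))‖ ≤
      Real.sqrt ((2 + γ) / (2 - γ)) * Real.exp (-γ * t / 2) := by
  set A : Matrix (Fin 2) (Fin 2) ℝ := !![0, 1; -1, -γ] with hA
  set C : ℝ := Real.sqrt ((2 + γ) / (2 - γ)) * Real.exp (-γ * t / 2) with hC
  have hCnn : 0 ≤ C := mul_nonneg (Real.sqrt_nonneg _) (Real.exp_pos _).le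
  set c : ℝ := Real.exp (-(γ * t)) with hc
  have hcpos : 0 < c := Real.exp_pos _
  have hC2 : C ^ 2 = (2 + γ) / (2 - γ) * c := by
    rw [hC, mul_pow, Real.sq_sqrt (div_nonneg (by linarith) (by linarith))]
    congr 1
    rw [pow_two, ← Real.exp_add]
    congr 1
    ring
  -- transfer exp through toEuclideanCLM
  have hmap : NormedSpace.exp (t • (Matrix.toEuclideanCLM (𝕜 := ℝ) (n := Fin 2) A)) =
      Matrix.toEuclideanCLM (𝕜 := ℝ) (n := Fin 2) (NormedSpace.exp (t • A)) := by
    letI : SeminormedRing (Matrix (Fin 2) (Fin 2) ℝ) := Matrix.linftyOpSemiNormedRing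
    letI : NormedRing (Matrix (Fin 2) (Fin 2) ℝ) := Matrix.linftyOpNormedRing
    letI : NormedAlgebra ℝ (Matrix (Fin 2) (Fin 2) ℝ) := Matrix.linftyOpNormedAlgebra
    have hcont : Continuous (Matrix.toEuclideanCLM (𝕜 := ℝ) (n := Fin 2)) :=
      LinearMap.continuous_of_finiteDimensional
        { toFun := fun M => Matrix.toEuclideanCLM (𝕜 := ℝ) (n := Fin 2) M,
          map_add' := fun M N => map_add _ M N,
          map_smul' := fun r M => map_smul _ r M }
    letI : NormedAlgebra ℚ (Matrix (Fin 2) (Fin 2) ℝ) := NormedAlgebra.restrictScalars ℚ ℝ _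
    have h2 := map_exp (Matrix.toEuclideanCLM (𝕜 := ℝ) (n := Fin 2)) hcont (t • A)
    rw [_root_.map_smul (Matrix.toEuclideanCLM (𝕜 := ℝ) (n := Fin 2))] at h2
    exact h2.symm
  rw [hmap]
  set E : Matrix (Fin 2) (Fin 2) ℝ := NormedSpace.exp (t • A) with hE
  have hK := matKey γ t h0 h2
  refine ContinuousLinearMap.opNorm_le_bound _ hCnn fun x => ?_
  set v : Fin 2 → ℝ := (WithLp.equiv 2 (Fin 2 → ℝ)) x with hv
  have hxv : x = (WithLp.equiv 2 (Fin 2 → ℝ)).symm v := (Equiv.symm_apply_apply _ _).symm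
  set y : Fin 2 → ℝ := E.mulVec v with hy
  have happ : Matrix.toEuclideanCLM (𝕜 := ℝ) (n := Fin 2) E x =
      (WithLp.equiv 2 (Fin 2 → ℝ)).symm y := by
    rw [hxv, hy]; rfl
  -- entry equations
  have h00 := congrFun (congrFun hK 0) 0
  have h01 := congrFun (congrFun hK 0) 1
  have h10 := congrFun (congrFun hK 1) 0
  have h11 := congrFun (congrFun hK 1) 1
  rw [← hA, ← hE, ← hc] at h00 h01 h10 h11
  simp [Matrix.mul_apply, Fin.sum_univ_two] at h00 h01 h10 h11
  have hy0 : y 0 = E 0 0 * v 0 + E 0 1 * v 1 := by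
    rw [hy]; simp [Matrix.mulVec, dotProduct, Fin.sum_univ_two]
  have hy1 : y 1 = E 1 0 * v 0 + E 1 1 * v 1 := by
    rw [hy]; simp [Matrix.mulVec, dotProduct, Fin.sum_univ_two]
  have hq : y 0 ^ 2 + γ * y 0 * y 1 + y 1 ^ 2
      = c * ((v 0) ^ 2 + γ * (v 0) * (v 1) + (v 1) ^ 2) := by
    rw [hy0, hy1]
    linear_combination (v 0)^2 * h00 + (v 0) * (v 1) * h01 + (v 0) * (v 1) * h10 + (v 1)^2 * h11
  have key : y 0 ^ 2 + y 1 ^ 2 ≤ C ^ 2 * ((v 0) ^ 2 + (v 1) ^ 2) := by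
    rw [hC2, div_mul_eq_mul_div, div_mul_eq_mul_div, le_div_iff₀ (by linarith)]
    nlinarith [mul_nonneg (mul_nonneg hcpos.le h0.le) (sq_nonneg (v 0 - v 1)),
      mul_nonneg h0.le (sq_nonneg (y 0 + y 1)), hq]
  -- norms
  have hnx : ‖x‖ = Real.sqrt ((v 0) ^ 2 + (v 1) ^ 2) := by
    rw [EuclideanSpace.norm_eq]
    congr 1
    simp [Fin.sum_univ_two, Real.norm_eq_abs, sq_abs]
    rfl
  have hnEx : ‖Matrix.toEuclideanCLM (𝕜 := ℝ) (n := Fin 2) E x‖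
      = Real.sqrt ((y 0) ^ 2 + (y 1) ^ 2) := by
    rw [happ, EuclideanSpace.norm_eq]
    congr 1
    simp [Fin.sum_univ_two, Real.norm_eq_abs, sq_abs]
  rw [hnEx, hnx]
  calc Real.sqrt ((y 0) ^ 2 + (y 1) ^ 2)
      ≤ Real.sqrt (C ^ 2 * ((v 0) ^ 2 + (v 1) ^ 2)) := Real.sqrt_le_sqrt key
    _ = C * Real.sqrt ((v 0) ^ 2 + (v 1) ^ 2) := by
        rw [Real.sqrt_mul (sq_nonneg C), Real.sqrt_sq hCnn]
end
end

section
/- Each step of the discretized system x_{n+1} = x_n + η(v_n − τ F(v_n, ηn) ⊙ x_n), v_{n+1,j} = v_{n,j} − η(Ω_j² x_{n,j} − τ J_j(x_n, ηn) − τ v_{n,j} G_j(x_n, ηn)) on ℝ^d × ℝ^d can be written as a composition of two affine coupling blocks: first the map (x_n, v_n) ↦ (x_n, v_{n+1}) with v_{n+1} = v_n ⊙ s(x_n) + t(x_n) where s(x_n) = (1 − ητ G(x_n, ηn)) and t(x_n) = −η(Ω² ⊙ x_n − τ J(x_n, ηn)), and then the map (x_n, v_{n+1}) ↦ (x_{n+1},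 v_{n+1}) with x_{n+1} = x_n ⊙ s'(v_{n+1}) + t'(v_{n+1}) where s'(v_{n+1}) = 1 − ητ F(v_{n+1}, ηn) and t'(v_{n+1}) = η v_{n+1}. In particular, if F, G, J are polynomials, the resulting affine coupling network has polynomial non-linearities. -/
noncomputable section

open Classical in
/-- An affine coupling block on `ℝ^ι`: a map `f(x_S, x_{Sᶜ}) = (x_S, x_{Sᶜ} ⊙ s(x_S) + t(x_S))`
for some coordinate subset `S` and functions `s, t` depending only on the coordinates
in `S`. -/
def IsAffineCouplingBlockOn {ι : Type*} (f : (ι → ℝ) → (ι → ℝ)) : Prop :=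
  ∃ (S : Set ι) (s t : (ι → ℝ) → (ι → ℝ)),
    (∀ x y : ι → ℝ, (∀ i ∈ S, x i = y i) → s x = s y ∧ t x = t y) ∧
    ∀ (x : ι → ℝ) (i : ι), f x i = if i ∈ S then x i else x i * s x i + t x i

/-- A map `ℝ^ι → ℝ^ι` each of whose coordinates is a polynomial. -/
def IsPolyMapOn {ι : Type*} (g : (ι → ℝ) → (ι → ℝ)) : Prop :=
  ∀ i : ι, ∃ q : MvPolynomial ι ℝ, ∀ x, g x i = MvPolynomial.eval x q

open Classical in
/-- An affine coupling block whose non-linearities `s, t` are polynomial maps. -/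
def IsAffineCouplingBlockPolyOn {ι : Type*} (f : (ι → ℝ) → (ι → ℝ)) : Prop :=
  ∃ (S : Set ι) (s t : (ι → ℝ) → (ι → ℝ)),
    IsPolyMapOn s ∧ IsPolyMapOn t ∧
    (∀ x y : ι → ℝ, (∀ i ∈ S, x i = y i) → s x = s y ∧ t x = t y) ∧
    ∀ (x : ι → ℝ) (i : ι), f x i = if i ∈ S then x i else x i * s x i + t x i

/-- A (time-dependent) map which, for each time, is given coordinatewise by polynomials
in the space variables. -/
def PolyInSpace {α β : Type*} (F : (α → ℝ) → ℝ → (β → ℝ)) : Prop :=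
  ∀ (t : ℝ) (j : β), ∃ q : MvPolynomial α ℝ, ∀ z, F z t j = MvPolynomial.eval z q

/-- One step of the discretization of the Hénon-like system, performed as the two
triangular substeps `(x_n, v_n) ↦ (x_n, v_{n+1}) ↦ (x_{n+1}, v_{n+1})`:
`v_{n+1,j} = v_{n,j} − η(Ω_j² x_{n,j} − τ J_j(x_n, ηn) − τ v_{n,j} G_j(x_n, ηn))` and
`x_{n+1} = x_n + η(v_{n+1} − τ F(v_{n+1}, ηn) ⊙ x_n)`.
Here `ℝ^{2d} = (Fin d ⊕ Fin d) → ℝ`, `inl` coordinates being `x` and `inr` being `v`. -/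
def altEulerStep (d : ℕ) (τ η : ℝ) (F G J : (Fin d → ℝ) → ℝ → (Fin d → ℝ))
    (Ω : Fin d → ℕ) (n : ℕ) (z : (Fin d ⊕ Fin d) → ℝ) : (Fin d ⊕ Fin d) → ℝ :=
  let newv : Fin d → ℝ := fun j =>
    z (Sum.inr j) - η * (((Ω j : ℝ)) ^ 2 * z (Sum.inl j) - τ * J (z ∘ Sum.inl) (η * n) j
      - τ * z (Sum.inr j) * G (z ∘ Sum.inl) (η * n) j)
  Sum.elim
    (fun j => z (Sum.inl j) + η * (newv j - τ * F newv (η * n) j * z (Sum.inl j)))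
    newv

/-- **Each step of the discretized Hénon-like system is a composition of two affine
coupling blocks with polynomial non-linearities**: first
`(x_n, v_n) ↦ (x_n, v_n ⊙ s(x_n) + t(x_n))` and then
`(x_n, v_{n+1}) ↦ (x_n ⊙ s'(v_{n+1}) + t'(v_{n+1}), v_{n+1})`, with
`s'(v) = 1 − ητ F(v, ηn)` and `t'(v) = η v`. -/
theorem stmt9 (d : ℕ) (η τ : ℝ) (n : ℕ)
    (F G J : (Fin d → ℝ) → ℝ → (Fin d → ℝ)) (Ω : Fin d → ℕ)
    (hF : PolyInSpace F) (hG : PolyInSpace G) (hJ : PolyInSpace J) :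
    ∃ f₁ f₂ : ((Fin d ⊕ Fin d) → ℝ) → ((Fin d ⊕ Fin d) → ℝ),
      IsAffineCouplingBlockPolyOn f₁ ∧ IsAffineCouplingBlockPolyOn f₂ ∧
      altEulerStep d τ η F G J Ω n = f₂ ∘ f₁ ∧
      (∀ (z : (Fin d ⊕ Fin d) → ℝ) (j : Fin d), f₁ z (Sum.inl j) = z (Sum.inl j)) ∧
      (∀ (z : (Fin d ⊕ Fin d) → ℝ) (j : Fin d), f₂ z (Sum.inr j) = z (Sum.inr j)) ∧
      (∀ (z : (Fin d ⊕ Fin d) → ℝ) (j : Fin d),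
        f₂ z (Sum.inl j) =
          z (Sum.inl j) * (1 - η * τ * F (z ∘ Sum.inr) (η * n) j) + η * z (Sum.inr j)) := by
  classical
  set s₁ : ((Fin d ⊕ Fin d) → ℝ) → ((Fin d ⊕ Fin d) → ℝ) :=
    fun z => Sum.elim (fun _ => (0:ℝ))
      (fun j => 1 + η * τ * G (z ∘ Sum.inl) (η * n) j) with hs₁
  set t₁ : ((Fin d ⊕ Fin d) → ℝ) → ((Fin d ⊕ Fin d) → ℝ) :=
    fun z => Sum.elim (fun _ => (0:ℝ))
      (fun j => -η * (((Ω j : ℝ)) ^ 2 * z (Sum.inl j) - τ * J (z ∘ Sum.inl) (η * n) j)) with ht₁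
  set f₁ : ((Fin d ⊕ Fin d) → ℝ) → ((Fin d ⊕ Fin d) → ℝ) :=
    fun z => Sum.elim (fun j => z (Sum.inl j))
      (fun j => z (Sum.inr j) * s₁ z (Sum.inr j) + t₁ z (Sum.inr j)) with hf₁
  set s₂ : ((Fin d ⊕ Fin d) → ℝ) → ((Fin d ⊕ Fin d) → ℝ) :=
    fun z => Sum.elim (fun j => 1 - η * τ * F (z ∘ Sum.inr) (η * n) j) (fun _ => (0:ℝ)) with hs₂
  set t₂ : ((Fin d ⊕ Fin d) → ℝ) → ((Fin d ⊕ Fin d) → ℝ) :=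
    fun z => Sum.elim (fun j => η * z (Sum.inr j)) (fun _ => (0:ℝ)) with ht₂
  set f₂ : ((Fin d ⊕ Fin d) → ℝ) → ((Fin d ⊕ Fin d) → ℝ) :=
    fun z => Sum.elim
      (fun j => z (Sum.inl j) * s₂ z (Sum.inl j) + t₂ z (Sum.inl j))
      (fun j => z (Sum.inr j)) with hf₂
  refine ⟨f₁, f₂, ?_, ?_, ?_, fun z j => rfl, fun z j => rfl, fun z j => rfl⟩
  · refine ⟨Set.range Sum.inl, s₁, t₁, ?_, ?_, ?_, ?_⟩
    · rintro (j | j)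
      · exact ⟨0, fun x => by simp [hs₁]⟩
      · obtain ⟨q, hq⟩ := hG (η * n) j
        refine ⟨MvPolynomial.C 1 + MvPolynomial.C (η * τ) * q.rename Sum.inl, fun x => ?_⟩
        simp [hs₁, hq, MvPolynomial.eval_rename]
    · rintro (j | j)
      · exact ⟨0, fun x => by simp [ht₁]⟩
      · obtain ⟨q, hq⟩ := hJ (η * n) j
        refine ⟨MvPolynomial.C (-η) * (MvPolynomial.C (((Ω j : ℝ)) ^ 2) * MvPolynomial.X (Sum.inl j)
          - MvPolynomial.C τ * q.rename Sum.inl), fun x => ?_⟩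
        simp [ht₁, hq, MvPolynomial.eval_rename]
    · intro x y h
      have hxy : x ∘ Sum.inl = y ∘ Sum.inl := funext fun j => h _ ⟨j, rfl⟩
      constructor <;> · funext i; rcases i with j | j <;>
        simp [hs₁, ht₁, hxy, h (Sum.inl j) ⟨j, rfl⟩]
    · intro x i
      rcases i with j | j
      · simp [hf₁]
      · rw [if_neg (by simp)]; rfl
  · refine ⟨Set.range Sum.inr, s₂, t₂, ?_, ?_, ?_, ?_⟩
    · rintro (j | j)
      · obtain ⟨q, hq⟩ := hF (η * n) j
        refine ⟨MvPolynomial.C 1 - MvPolynomial.C (η * τ) * q.rename Sum.inr, fun x => ?_⟩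
        simp [hs₂, hq, MvPolynomial.eval_rename]
      · exact ⟨0, fun x => by simp [hs₂]⟩
    · rintro (j | j)
      · exact ⟨MvPolynomial.C η * MvPolynomial.X (Sum.inr j), fun x => by simp [ht₂]⟩
      · exact ⟨0, fun x => by simp [ht₂]⟩
    · intro x y h
      have hxy : x ∘ Sum.inr = y ∘ Sum.inr := funext fun j => h _ ⟨j, rfl⟩
      constructor <;> · funext i; rcases i with j | j <;>
        simp [hs₂, ht₂, hxy, h (Sum.inr j) ⟨j, rfl⟩]
    · intro x i
      rcases i with j | j
      · rw [if_neg (by simp)]; rfl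
      · simp [hf₂]
  · funext z
    have hv : (f₁ z) ∘ Sum.inr = fun j =>
        z (Sum.inr j) - η * (((Ω j : ℝ)) ^ 2 * z (Sum.inl j) - τ * J (z ∘ Sum.inl) (η * n) j
          - τ * z (Sum.inr j) * G (z ∘ Sum.inl) (η * n) j) := by
      funext j
      simp only [hf₁, hs₁, ht₁, Function.comp_apply, Sum.elim_inr]
      ring
    funext i
    rcases i with j | j
    · show _ = f₂ (f₁ z) (Sum.inl j)
      simp only [altEulerStep, hf₂, hs₂, ht₂, Sum.elim_inl, hv]
      have : (f₁ z) (Sum.inl j) = z (Sum.inl j) := rfl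
      rw [show f₁ z (Sum.inr j) = ((f₁ z) ∘ Sum.inr) j from rfl, hv, this]
      ring
    · show _ = f₂ (f₁ z) (Sum.inr j)
      simp only [altEulerStep, Sum.elim_inr, hf₂]
      rw [show f₁ z (Sum.inr j) = ((f₁ z) ∘ Sum.inr) j from rfl, hv]
end
end
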